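/- Under the split Bregman iteration setting, suppose β* ∈ ℝ^p is a global minimizer of Φ(β) = V(β) + λ₁‖β‖₁ + λ₂‖Lβ‖₁, and let h* ∈ ∂V(β*), p* ∈ ∂‖·‖₁(β*), q* ∈ ∂‖·‖₁(Lβ*) satisfy h* + λ₁p* + λ₂Lᵀq* = 0. Then the ℓ1 Bregman distances along the iterates vanish: lim_{k→∞} [ ‖β^k‖₁ − ‖β*‖₁ − ⟨p*, β^k − β*⟩ ] = 0 and lim_{k→∞} [ ‖Lβ^k‖₁ − ‖Lβ*‖₁ − ⟨q*, Lβ^k − Lβ*⟩ ] = 0. -/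
import Mathlib


open Filter Matrix Finset

/-- The ℓ1 norm on `Fin d → ℝ`. -/
noncomputable def l1 {d : ℕ} (x : Fin d → ℝ) : ℝ := ∑ i, |x i|

/-- The Euclidean (ℓ2) norm on `Fin d → ℝ`. -/
noncomputable def l2 {d : ℕ} (x : Fin d → ℝ) : ℝ := Real.sqrt (∑ i, (x i) ^ 2)

/-- The Euclidean inner product on `Fin d → ℝ`. -/
def dotp {d : ℕ} (x y : Fin d → ℝ) : ℝ := ∑ i, x i * y i

/-- `g` is a subgradient of `f` at `x`. -/
def IsSubgrad {d : ℕ} (f : (Fin d → ℝ) → ℝ) (x g : Fin d → ℝ) : Prop :=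
  ∀ z, f z ≥ f x + dotp g (z - x)

def sqnv {d : ℕ} (x : Fin d → ℝ) : ℝ := dotp x x

lemma sb_dotp_add_left {d : ℕ} (x y z : Fin d → ℝ) :
    dotp (x + y) z = dotp x z + dotp y z := by
  simp [dotp, add_mul, Finset.sum_add_distrib]

lemma sb_dotp_sub_left {d : ℕ} (x y z : Fin d → ℝ) :
    dotp (x - y) z = dotp x z - dotp y z := by
  simp [dotp, sub_mul, Finset.sum_sub_distrib]

lemma sb_dotp_sub_right {d : ℕ} (x y z : Fin d → ℝ) :
    dotp x (y - z) = dotp x y - dotp x z := by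
  simp [dotp, mul_sub, Finset.sum_sub_distrib]

lemma sb_dotp_smul_left {d : ℕ} (c : ℝ) (x z : Fin d → ℝ) :
    dotp (c • x) z = c * dotp x z := by
  simp [dotp, Finset.mul_sum, mul_assoc]

lemma sb_dotp_zero_left {d : ℕ} (z : Fin d → ℝ) : dotp 0 z = 0 := by
  simp [dotp]

lemma sb_sqn_nonneg {d : ℕ} (x : Fin d → ℝ) : 0 ≤ sqnv x := by
  unfold sqnv dotp
  exact Finset.sum_nonneg fun i _ => mul_self_nonneg _

lemma sb_two_dotp {d : ℕ} (x y : Fin d → ℝ) :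
    2 * dotp (x - y) x = sqnv x - sqnv y + sqnv (x - y) := by
  simp only [dotp, sqnv, Pi.sub_apply, Finset.mul_sum]
  rw [← Finset.sum_sub_distrib, ← Finset.sum_add_distrib]
  exact Finset.sum_congr rfl fun i _ => by ring

lemma sb_sqn_add_smul {d : ℕ} (c : ℝ) (x y : Fin d → ℝ) :
    sqnv (x + c • y) = sqnv x + 2 * c * dotp x y + c ^ 2 * sqnv y := by
  simp only [dotp, sqnv, Pi.add_apply, Pi.smul_apply, smul_eq_mul, Finset.mul_sum]
  rw [← Finset.sum_add_distrib, ← Finset.sum_add_distrib]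
  exact Finset.sum_congr rfl fun i _ => by ring

lemma sb_sqn_sub_comm {d : ℕ} (x y : Fin d → ℝ) : sqnv (x - y) = sqnv (y - x) := by
  simp only [sqnv, dotp, Pi.sub_apply]
  exact Finset.sum_congr rfl fun i _ => by ring

lemma sb_adj {mm pp : ℕ} (L : Matrix (Fin mm) (Fin pp) ℝ) (w : Fin mm → ℝ) (x : Fin pp → ℝ) :
    dotp (L.transpose.mulVec w) x = dotp w (L.mulVec x) := by
  simp only [dotp, Matrix.mulVec, dotProduct, Matrix.transpose_apply,
    Finset.sum_mul, Finset.mul_sum]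
  rw [Finset.sum_comm]
  exact Finset.sum_congr rfl fun j _ => Finset.sum_congr rfl fun i _ => by ring

lemma sb_dotp_neg_sub {d : ℕ} (g x y : Fin d → ℝ) :
    dotp g (y - x) = -dotp g (x - y) := by
  simp only [dotp, Pi.sub_apply]
  rw [← Finset.sum_neg_distrib]
  exact Finset.sum_congr rfl fun i _ => by ring

lemma sb_breg {d : ℕ} (f : (Fin d → ℝ) → ℝ) (x y g g' : Fin d → ℝ)
    (hg : IsSubgrad f x g) (hg' : IsSubgrad f y g') :
    0 ≤ f x - f y - dotp g' (x - y) ∧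
      f x - f y - dotp g' (x - y) ≤ dotp (g - g') (x - y) := by
  have h1 := hg' x
  have h2 := hg y
  rw [sb_dotp_neg_sub g x y] at h2
  have e2 : dotp (g - g') (x - y) = dotp g (x - y) - dotp g' (x - y) :=
    sb_dotp_sub_left _ _ _
  constructor
  · linarith
  · linarith

lemma sb_l1_nonneg {d : ℕ} (x : Fin d → ℝ) : 0 ≤ l1 x :=
  Finset.sum_nonneg fun i _ => abs_nonneg _

lemma sb_l1_add_le {d : ℕ} (x y : Fin d → ℝ) : l1 (x + y) ≤ l1 x + l1 y := by
  calc l1 (x + y) = ∑ i, |x i + y i| := rfl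
    _ ≤ ∑ i, (|x i| + |y i|) := Finset.sum_le_sum fun i _ => abs_add_le _ _
    _ = l1 x + l1 y := Finset.sum_add_distrib

lemma sb_l1_sub_le {d : ℕ} (x y : Fin d → ℝ) : l1 x ≤ l1 y + l1 (x - y) := by
  have h := sb_l1_add_le y (x - y)
  have : y + (x - y) = x := by abel
  rwa [this] at h

lemma sb_dotp_single {d : ℕ} (g : Fin d → ℝ) (i : Fin d) (c : ℝ) :
    dotp g (Pi.single i c) = g i * c := by
  simp [dotp, Pi.single_apply, mul_ite, Finset.sum_ite_eq']

lemma sb_l1_single {d : ℕ} (i : Fin d) (c : ℝ) : l1 (Pi.single i c) = |c| := by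
  simp [l1, Pi.single_apply, apply_ite abs, Finset.sum_ite_eq']

lemma sb_coord_bound {d : ℕ} (y g : Fin d → ℝ) (hg : IsSubgrad l1 y g) (i : Fin d) :
    |g i| ≤ 1 := by
  have h1 := hg (y + Pi.single i 1)
  have h2 := hg (y + Pi.single i (-1))
  have e1 : (y + Pi.single i 1) - y = Pi.single i (1:ℝ) := by abel
  have e2 : (y + Pi.single i (-1)) - y = Pi.single i (-1:ℝ) := by abel
  rw [e1, sb_dotp_single] at h1
  rw [e2, sb_dotp_single] at h2
  have t1 : l1 (y + Pi.single i 1) ≤ l1 y + 1 := by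
    have := sb_l1_add_le y (Pi.single i (1:ℝ))
    rwa [sb_l1_single, abs_one] at this
  have t2 : l1 (y + Pi.single i (-1)) ≤ l1 y + 1 := by
    have := sb_l1_add_le y (Pi.single i (-1:ℝ))
    rw [sb_l1_single] at this
    simpa using this
  rw [abs_le]
  constructor <;> nlinarith

lemma sb_dotp_abs_le {d : ℕ} (g z : Fin d → ℝ) (hg : ∀ i, |g i| ≤ 1) :
    |dotp g z| ≤ l1 z := by
  calc |dotp g z| ≤ ∑ i, |g i * z i| := Finset.abs_sum_le_sum_abs _ _
    _ ≤ ∑ i, |z i| := Finset.sum_le_sum fun i _ => by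
        rw [abs_mul]
        calc |g i| * |z i| ≤ 1 * |z i| :=
          mul_le_mul_of_nonneg_right (hg i) (abs_nonneg _)
        _ = |z i| := one_mul _
    _ = l1 z := rfl

lemma sb_l1_le_sqrt {d : ℕ} (z : Fin d → ℝ) : l1 z ≤ d * Real.sqrt (sqnv z) := by
  have h : ∀ i : Fin d, |z i| ≤ Real.sqrt (sqnv z) := by
    intro i
    rw [← Real.sqrt_sq_eq_abs]
    apply Real.sqrt_le_sqrt
    rw [show z i ^ 2 = z i * z i from by ring]
    exact Finset.single_le_sum (fun j _ => mul_self_nonneg (z j)) (Finset.mem_univ i)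
  calc l1 z ≤ ∑ _i : Fin d, Real.sqrt (sqnv z) := Finset.sum_le_sum fun i _ => h i
    _ = d * Real.sqrt (sqnv z) := by simp [Finset.sum_const, nsmul_eq_mul]

set_option maxHeartbeats 2000000 in
/-- The ℓ1 Bregman distances along the split Bregman iterates vanish. -/
theorem splitBregman_bregmanDistance_l1_vanishes
    {p m : ℕ} (hp : 0 < p) (hm : 0 < m)
    (V : (Fin p → ℝ) → ℝ) (hV : ConvexOn ℝ Set.univ V)
    (L : Matrix (Fin m) (Fin p) ℝ)
    (lam1 lam2 mu1 mu2 del1 del2 : ℝ)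
    (hlam1 : 0 < lam1) (hlam2 : 0 < lam2)
    (hmu1 : 0 < mu1) (hmu2 : 0 < mu2)
    (hdel1 : 0 < del1) (hdel1' : del1 ≤ mu1)
    (hdel2 : 0 < del2) (hdel2' : del2 ≤ mu2)
    (Beta a u h pp : ℕ → Fin p → ℝ)
    (b v qq : ℕ → Fin m → ℝ)
    (hh : ∀ k : ℕ, IsSubgrad V (Beta (k+1)) (h (k+1)))
    (hpp : ∀ k : ℕ, IsSubgrad l1 (a (k+1)) (pp (k+1)))
    (hqq : ∀ k : ℕ, IsSubgrad l1 (b (k+1)) (qq (k+1)))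
    (iter1 : ∀ k : ℕ, (0 : Fin p → ℝ) =
      h (k+1) + u k + L.transpose.mulVec (v k)
        + mu1 • (Beta (k+1) - a k)
        + mu2 • L.transpose.mulVec (L.mulVec (Beta (k+1)) - b k))
    (iter2 : ∀ k : ℕ, lam1 • pp (k+1) - u k + mu1 • (a (k+1) - Beta (k+1)) = 0)
    (iter3 : ∀ k : ℕ, lam2 • qq (k+1) - v k + mu2 • (b (k+1) - L.mulVec (Beta (k+1))) = 0)
    (iter4 : ∀ k : ℕ, u (k+1) = u k + del1 • (Beta (k+1) - a (k+1)))
    (iter5 : ∀ k : ℕ, v (k+1) = v k + del2 • (L.mulVec (Beta (k+1)) - b (k+1)))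
    (Bstar hstar pstar : Fin p → ℝ) (qstar : Fin m → ℝ)
    (hmin : ∀ x : Fin p → ℝ,
      V Bstar + lam1 * l1 Bstar + lam2 * l1 (L.mulVec Bstar)
        ≤ V x + lam1 * l1 x + lam2 * l1 (L.mulVec x))
    (hhs : IsSubgrad V Bstar hstar)
    (hps : IsSubgrad l1 Bstar pstar)
    (hqs : IsSubgrad l1 (L.mulVec Bstar) qstar)
    (hopt : hstar + lam1 • pstar + lam2 • L.transpose.mulVec qstar = 0) :
    Tendsto (fun k : ℕ => l1 (Beta k) - l1 Bstar - dotp pstar (Beta k - Bstar))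
      atTop (nhds 0) ∧
    Tendsto (fun k : ℕ =>
        l1 (L.mulVec (Beta k)) - l1 (L.mulVec Bstar)
          - dotp qstar (L.mulVec (Beta k) - L.mulVec Bstar))
      atTop (nhds 0) := by
  classical
  set E : ℕ → ℝ := fun k =>
    del2 * sqnv (u k - lam1 • pstar) + del1 * sqnv (v k - lam2 • qstar)
      + del1 * del2 * mu1 * sqnv (a k - Bstar)
      + del1 * del2 * mu2 * sqnv (b k - L.mulVec Bstar) with hEdef
  set T : ℕ → ℝ := fun k =>
    2 * del1 * del2 * (dotp (h (k+1) - hstar) (Beta (k+1) - Bstar)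
      + lam1 * dotp (pp (k+1) - pstar) (a (k+1) - Bstar)
      + lam2 * dotp (qq (k+1) - qstar) (b (k+1) - L.mulVec Bstar))
      + del1 * del2 * (mu1 - del1) * sqnv (Beta (k+1) - a (k+1))
      + del1 * del2 * mu1 * sqnv (Beta (k+1) - a k)
      + del1 * del2 * (mu2 - del2) * sqnv (L.mulVec (Beta (k+1)) - b (k+1))
      + del1 * del2 * mu2 * sqnv (L.mulVec (Beta (k+1)) - b k) with hTdef
  have key : ∀ k : ℕ, E (k+1) + T k = E k := by
    intro k
    have e1 : (h (k+1) - hstar) + (u k - lam1 • pstar)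
        + L.transpose.mulVec (v k - lam2 • qstar)
        + mu1 • (Beta (k+1) - a k)
        + mu2 • L.transpose.mulVec (L.mulVec (Beta (k+1)) - b k) = 0 := by
      have h1 := iter1 k
      rw [Matrix.mulVec_sub, Matrix.mulVec_smul]
      linear_combination (norm := module) (-1 : ℝ) • h1 - hopt
    have e2 : lam1 • (pp (k+1) - pstar) + (-1 : ℝ) • (u k - lam1 • pstar)
        + mu1 • (a (k+1) - Beta (k+1)) = 0 := by
      linear_combination (norm := module) iter2 k
    have e3 : lam2 • (qq (k+1) - qstar) + (-1 : ℝ) • (v k - lam2 • qstar)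
        + mu2 • (b (k+1) - L.mulVec (Beta (k+1))) = 0 := by
      linear_combination (norm := module) iter3 k
    have e4 : u (k+1) - lam1 • pstar
        = (u k - lam1 • pstar) + del1 • (Beta (k+1) - a (k+1)) := by
      linear_combination (norm := module) iter4 k
    have e5 : v (k+1) - lam2 • qstar
        = (v k - lam2 • qstar) + del2 • (L.mulVec (Beta (k+1)) - b (k+1)) := by
      linear_combination (norm := module) iter5 k
    have s1 : dotp (h (k+1) - hstar) (Beta (k+1) - Bstar)
        + dotp (u k - lam1 • pstar) (Beta (k+1) - Bstar)
        + dotp (v k - lam2 • qstar) (L.mulVec (Beta (k+1)) - L.mulVec Bstar)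
        + mu1 * dotp (Beta (k+1) - a k) (Beta (k+1) - Bstar)
        + mu2 * dotp (L.mulVec (Beta (k+1)) - b k)
            (L.mulVec (Beta (k+1)) - L.mulVec Bstar) = 0 := by
      have h0 := congrArg (fun w => dotp w (Beta (k+1) - Bstar)) e1
      simp only [sb_dotp_add_left, sb_dotp_smul_left, sb_dotp_zero_left, sb_adj] at h0
      rw [Matrix.mulVec_sub] at h0
      linear_combination h0
    have s2 : lam1 * dotp (pp (k+1) - pstar) (a (k+1) - Bstar)
        + (-1 : ℝ) * dotp (u k - lam1 • pstar) (a (k+1) - Bstar)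
        + mu1 * dotp (a (k+1) - Beta (k+1)) (a (k+1) - Bstar) = 0 := by
      have h0 := congrArg (fun w => dotp w (a (k+1) - Bstar)) e2
      simp only [sb_dotp_add_left, sb_dotp_smul_left, sb_dotp_zero_left] at h0
      linear_combination h0
    have s3 : lam2 * dotp (qq (k+1) - qstar) (b (k+1) - L.mulVec Bstar)
        + (-1 : ℝ) * dotp (v k - lam2 • qstar) (b (k+1) - L.mulVec Bstar)
        + mu2 * dotp (b (k+1) - L.mulVec (Beta (k+1))) (b (k+1) - L.mulVec Bstar)
          = 0 := by
      have h0 := congrArg (fun w => dotp w (b (k+1) - L.mulVec Bstar)) e3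
      simp only [sb_dotp_add_left, sb_dotp_smul_left, sb_dotp_zero_left] at h0
      linear_combination h0
    have hsplit1 : dotp (u k - lam1 • pstar) (Beta (k+1) - a (k+1))
        = dotp (u k - lam1 • pstar) (Beta (k+1) - Bstar)
          - dotp (u k - lam1 • pstar) (a (k+1) - Bstar) := by
      rw [sb_dotp_sub_right, sb_dotp_sub_right, sb_dotp_sub_right]; ring
    have s4 : sqnv (u (k+1) - lam1 • pstar)
        = sqnv (u k - lam1 • pstar)
          + 2 * del1 * (dotp (u k - lam1 • pstar) (Beta (k+1) - Bstar)
            - dotp (u k - lam1 • pstar) (a (k+1) - Bstar))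
          + del1 ^ 2 * sqnv (Beta (k+1) - a (k+1)) := by
      rw [e4, sb_sqn_add_smul, hsplit1]
    have hsplit2 : dotp (v k - lam2 • qstar) (L.mulVec (Beta (k+1)) - b (k+1))
        = dotp (v k - lam2 • qstar) (L.mulVec (Beta (k+1)) - L.mulVec Bstar)
          - dotp (v k - lam2 • qstar) (b (k+1) - L.mulVec Bstar) := by
      rw [sb_dotp_sub_right, sb_dotp_sub_right, sb_dotp_sub_right]; ring
    have s5 : sqnv (v (k+1) - lam2 • qstar)
        = sqnv (v k - lam2 • qstar)
          + 2 * del2 * (dotp (v k - lam2 • qstar) (L.mulVec (Beta (k+1)) - L.mulVec Bstar)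
            - dotp (v k - lam2 • qstar) (b (k+1) - L.mulVec Bstar))
          + del2 ^ 2 * sqnv (L.mulVec (Beta (k+1)) - b (k+1)) := by
      rw [e5, sb_sqn_add_smul, hsplit2]
    have hv1 : (Beta (k+1) - a k : Fin p → ℝ)
        = (Beta (k+1) - Bstar) - (a k - Bstar) := by abel
    have x1 : 2 * dotp (Beta (k+1) - a k) (Beta (k+1) - Bstar)
        = sqnv (Beta (k+1) - Bstar) - sqnv (a k - Bstar) + sqnv (Beta (k+1) - a k) := by
      conv_lhs => rw [hv1]
      rw [sb_two_dotp, ← hv1]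
    have hv2 : (a (k+1) - Beta (k+1) : Fin p → ℝ)
        = (a (k+1) - Bstar) - (Beta (k+1) - Bstar) := by abel
    have x2 : 2 * dotp (a (k+1) - Beta (k+1)) (a (k+1) - Bstar)
        = sqnv (a (k+1) - Bstar) - sqnv (Beta (k+1) - Bstar)
          + sqnv (a (k+1) - Beta (k+1)) := by
      conv_lhs => rw [hv2]
      rw [sb_two_dotp, ← hv2]
    have hv3 : (L.mulVec (Beta (k+1)) - b k : Fin m → ℝ)
        = (L.mulVec (Beta (k+1)) - L.mulVec Bstar) - (b k - L.mulVec Bstar) := by abel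
    have x3 : 2 * dotp (L.mulVec (Beta (k+1)) - b k)
          (L.mulVec (Beta (k+1)) - L.mulVec Bstar)
        = sqnv (L.mulVec (Beta (k+1)) - L.mulVec Bstar) - sqnv (b k - L.mulVec Bstar)
          + sqnv (L.mulVec (Beta (k+1)) - b k) := by
      conv_lhs => rw [hv3]
      rw [sb_two_dotp, ← hv3]
    have hv4 : (b (k+1) - L.mulVec (Beta (k+1)) : Fin m → ℝ)
        = (b (k+1) - L.mulVec Bstar) - (L.mulVec (Beta (k+1)) - L.mulVec Bstar) := by
      abel
    have x4 : 2 * dotp (b (k+1) - L.mulVec (Beta (k+1))) (b (k+1) - L.mulVec Bstar)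
        = sqnv (b (k+1) - L.mulVec Bstar)
          - sqnv (L.mulVec (Beta (k+1)) - L.mulVec Bstar)
          + sqnv (b (k+1) - L.mulVec (Beta (k+1))) := by
      conv_lhs => rw [hv4]
      rw [sb_two_dotp, ← hv4]
    have x5 : sqnv (a (k+1) - Beta (k+1)) = sqnv (Beta (k+1) - a (k+1)) :=
      sb_sqn_sub_comm _ _
    have x6 : sqnv (b (k+1) - L.mulVec (Beta (k+1)))
        = sqnv (L.mulVec (Beta (k+1)) - b (k+1)) := sb_sqn_sub_comm _ _
    simp only [hEdef, hTdef]
    linear_combination (2*del1*del2) * s1 + (2*del1*del2) * s2 + (2*del1*del2) * s3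
      + del2 * s4 + del1 * s5
      - (del1*del2*mu1) * x1 - (del1*del2*mu1) * x2 - (del1*del2*mu1) * x5
      - (del1*del2*mu2) * x3 - (del1*del2*mu2) * x4 - (del1*del2*mu2) * x6
  -- nonnegativity facts
  have hHk : ∀ k : ℕ, 0 ≤ dotp (h (k+1) - hstar) (Beta (k+1) - Bstar) := by
    intro k
    obtain ⟨h1, h2⟩ := sb_breg V (Beta (k+1)) Bstar (h (k+1)) hstar (hh k) hhs
    linarith
  have hPk1 : ∀ k : ℕ, 0 ≤ l1 (a (k+1)) - l1 Bstar - dotp pstar (a (k+1) - Bstar) :=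
    fun k => (sb_breg l1 (a (k+1)) Bstar (pp (k+1)) pstar (hpp k) hps).1
  have hPk2 : ∀ k : ℕ, l1 (a (k+1)) - l1 Bstar - dotp pstar (a (k+1) - Bstar)
      ≤ dotp (pp (k+1) - pstar) (a (k+1) - Bstar) :=
    fun k => (sb_breg l1 (a (k+1)) Bstar (pp (k+1)) pstar (hpp k) hps).2
  have hQk1 : ∀ k : ℕ, 0 ≤ l1 (b (k+1)) - l1 (L.mulVec Bstar)
      - dotp qstar (b (k+1) - L.mulVec Bstar) :=
    fun k => (sb_breg l1 (b (k+1)) (L.mulVec Bstar) (qq (k+1)) qstar (hqq k) hqs).1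
  have hQk2 : ∀ k : ℕ, l1 (b (k+1)) - l1 (L.mulVec Bstar)
      - dotp qstar (b (k+1) - L.mulVec Bstar)
      ≤ dotp (qq (k+1) - qstar) (b (k+1) - L.mulVec Bstar) :=
    fun k => (sb_breg l1 (b (k+1)) (L.mulVec Bstar) (qq (k+1)) qstar (hqq k) hqs).2
  have hPk0 : ∀ k : ℕ, 0 ≤ dotp (pp (k+1) - pstar) (a (k+1) - Bstar) :=
    fun k => (hPk1 k).trans (hPk2 k)
  have hQk0 : ∀ k : ℕ, 0 ≤ dotp (qq (k+1) - qstar) (b (k+1) - L.mulVec Bstar) :=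
    fun k => (hQk1 k).trans (hQk2 k)
  have hTnn : ∀ k : ℕ, 0 ≤ T k := by
    intro k
    simp only [hTdef]
    have n1 : (0:ℝ) ≤ 2 * del1 * del2 * (dotp (h (k+1) - hstar) (Beta (k+1) - Bstar)
        + lam1 * dotp (pp (k+1) - pstar) (a (k+1) - Bstar)
        + lam2 * dotp (qq (k+1) - qstar) (b (k+1) - L.mulVec Bstar)) := by
      apply mul_nonneg (by positivity)
      have := hHk k; have := hPk0 k; have := hQk0 k
      have := mul_nonneg hlam1.le (hPk0 k); have := mul_nonneg hlam2.le (hQk0 k)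
      linarith
    have n2 : (0:ℝ) ≤ del1 * del2 * (mu1 - del1) * sqnv (Beta (k+1) - a (k+1)) :=
      mul_nonneg (mul_nonneg (by positivity) (by linarith)) (sb_sqn_nonneg _)
    have n3 : (0:ℝ) ≤ del1 * del2 * mu1 * sqnv (Beta (k+1) - a k) :=
      mul_nonneg (by positivity) (sb_sqn_nonneg _)
    have n4 : (0:ℝ) ≤ del1 * del2 * (mu2 - del2) * sqnv (L.mulVec (Beta (k+1)) - b (k+1)) :=
      mul_nonneg (mul_nonneg (by positivity) (by linarith)) (sb_sqn_nonneg _)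
    have n5 : (0:ℝ) ≤ del1 * del2 * mu2 * sqnv (L.mulVec (Beta (k+1)) - b k) :=
      mul_nonneg (by positivity) (sb_sqn_nonneg _)
    linarith
  have hEnn : ∀ k : ℕ, 0 ≤ E k := by
    intro k
    simp only [hEdef]
    have n1 : (0:ℝ) ≤ del2 * sqnv (u k - lam1 • pstar) :=
      mul_nonneg hdel2.le (sb_sqn_nonneg _)
    have n2 : (0:ℝ) ≤ del1 * sqnv (v k - lam2 • qstar) :=
      mul_nonneg hdel1.le (sb_sqn_nonneg _)
    have n3 : (0:ℝ) ≤ del1 * del2 * mu1 * sqnv (a k - Bstar) :=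
      mul_nonneg (by positivity) (sb_sqn_nonneg _)
    have n4 : (0:ℝ) ≤ del1 * del2 * mu2 * sqnv (b k - L.mulVec Bstar) :=
      mul_nonneg (by positivity) (sb_sqn_nonneg _)
    linarith
  -- E is antitone and bounded below, so T → 0
  have hanti : Antitone E :=
    antitone_nat_of_succ_le fun k => by have := key k; have := hTnn k; linarith
  have hbdd : BddBelow (Set.range E) := ⟨0, by rintro x ⟨k, rfl⟩; exact hEnn k⟩
  have hconv : Tendsto E atTop (nhds (⨅ k, E k)) := tendsto_atTop_ciInf hanti hbdd
  have hconv1 : Tendsto (fun k => E (k+1)) atTop (nhds (⨅ k, E k)) :=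
    (tendsto_add_atTop_iff_nat 1).mpr hconv
  have hTto : Tendsto T atTop (nhds 0) := by
    have hfun : T = fun k => E k - E (k+1) := funext fun k => by linarith [key k]
    rw [hfun]
    simpa using hconv.sub hconv1
  -- extract vanishing components by squeezing
  have hsqueeze : ∀ (f : ℕ → ℝ), (∀ k, 0 ≤ f k) → (∀ k, f k ≤ T k) →
      Tendsto f atTop (nhds 0) := fun f h0 h1 => squeeze_zero h0 h1 hTto
  have cP : (0:ℝ) < 2 * del1 * del2 * lam1 := by positivity
  have cQ : (0:ℝ) < 2 * del1 * del2 * lam2 := by positivity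
  have cM1 : (0:ℝ) < del1 * del2 * mu1 := by positivity
  have cM2 : (0:ℝ) < del1 * del2 * mu2 := by positivity
  have boundsT : ∀ k : ℕ,
      2 * del1 * del2 * lam1 *
          (l1 (a (k+1)) - l1 Bstar - dotp pstar (a (k+1) - Bstar)) ≤ T k ∧
      2 * del1 * del2 * lam2 *
          (l1 (b (k+1)) - l1 (L.mulVec Bstar)
            - dotp qstar (b (k+1) - L.mulVec Bstar)) ≤ T k ∧
      del1 * del2 * mu1 * sqnv (Beta (k+1) - a k) ≤ T k ∧
      del1 * del2 * mu2 * sqnv (L.mulVec (Beta (k+1)) - b k) ≤ T k := by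
    intro k
    simp only [hTdef]
    have n1 := mul_nonneg (mul_nonneg (mul_nonneg (by norm_num : (0:ℝ) ≤ 2) hdel1.le)
      hdel2.le) (hHk k)
    have n2 : (0:ℝ) ≤ 2 * del1 * del2 * lam1 * dotp (pp (k+1) - pstar) (a (k+1) - Bstar) :=
      mul_nonneg cP.le (hPk0 k)
    have n3 : (0:ℝ) ≤ 2 * del1 * del2 * lam2 *
        dotp (qq (k+1) - qstar) (b (k+1) - L.mulVec Bstar) := mul_nonneg cQ.le (hQk0 k)
    have n4 : (0:ℝ) ≤ del1 * del2 * (mu1 - del1) * sqnv (Beta (k+1) - a (k+1)) :=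
      mul_nonneg (mul_nonneg (by positivity) (by linarith)) (sb_sqn_nonneg _)
    have n5 : (0:ℝ) ≤ del1 * del2 * mu1 * sqnv (Beta (k+1) - a k) :=
      mul_nonneg cM1.le (sb_sqn_nonneg _)
    have n6 : (0:ℝ) ≤ del1 * del2 * (mu2 - del2) * sqnv (L.mulVec (Beta (k+1)) - b (k+1)) :=
      mul_nonneg (mul_nonneg (by positivity) (by linarith)) (sb_sqn_nonneg _)
    have n7 : (0:ℝ) ≤ del1 * del2 * mu2 * sqnv (L.mulVec (Beta (k+1)) - b k) :=
      mul_nonneg cM2.le (sb_sqn_nonneg _)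
    have bP : 2 * del1 * del2 * lam1 *
        (l1 (a (k+1)) - l1 Bstar - dotp pstar (a (k+1) - Bstar))
        ≤ 2 * del1 * del2 * lam1 * dotp (pp (k+1) - pstar) (a (k+1) - Bstar) :=
      mul_le_mul_of_nonneg_left (hPk2 k) cP.le
    have bQ : 2 * del1 * del2 * lam2 *
        (l1 (b (k+1)) - l1 (L.mulVec Bstar) - dotp qstar (b (k+1) - L.mulVec Bstar))
        ≤ 2 * del1 * del2 * lam2 *
          dotp (qq (k+1) - qstar) (b (k+1) - L.mulVec Bstar) :=
      mul_le_mul_of_nonneg_left (hQk2 k) cQ.le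
    refine ⟨by nlinarith, by nlinarith, by nlinarith, by nlinarith⟩
  have hDpa : Tendsto (fun k => l1 (a (k+1)) - l1 Bstar
      - dotp pstar (a (k+1) - Bstar)) atTop (nhds 0) := by
    have hA := hsqueeze _ (fun k => mul_nonneg cP.le (hPk1 k)) (fun k => (boundsT k).1)
    have heq : (fun k => l1 (a (k+1)) - l1 Bstar - dotp pstar (a (k+1) - Bstar))
        = fun k => (1/(2 * del1 * del2 * lam1)) * (2 * del1 * del2 * lam1 *
            (l1 (a (k+1)) - l1 Bstar - dotp pstar (a (k+1) - Bstar))) := by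
      funext k; rw [one_div, inv_mul_cancel_left₀ cP.ne']
    rw [heq]
    simpa using hA.const_mul (1/(2 * del1 * del2 * lam1))
  have hDqb : Tendsto (fun k => l1 (b (k+1)) - l1 (L.mulVec Bstar)
      - dotp qstar (b (k+1) - L.mulVec Bstar)) atTop (nhds 0) := by
    have hA := hsqueeze _ (fun k => mul_nonneg cQ.le (hQk1 k)) (fun k => (boundsT k).2.1)
    have heq : (fun k => l1 (b (k+1)) - l1 (L.mulVec Bstar)
        - dotp qstar (b (k+1) - L.mulVec Bstar))
        = fun k => (1/(2 * del1 * del2 * lam2)) * (2 * del1 * del2 * lam2 *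
            (l1 (b (k+1)) - l1 (L.mulVec Bstar)
              - dotp qstar (b (k+1) - L.mulVec Bstar))) := by
      funext k; rw [one_div, inv_mul_cancel_left₀ cQ.ne']
    rw [heq]
    simpa using hA.const_mul (1/(2 * del1 * del2 * lam2))
  have hsq1 : Tendsto (fun k => sqnv (Beta (k+1) - a k)) atTop (nhds 0) := by
    have hA := hsqueeze _ (fun k => mul_nonneg cM1.le (sb_sqn_nonneg _))
      (fun k => (boundsT k).2.2.1)
    have heq : (fun k => sqnv (Beta (k+1) - a k))
        = fun k => (1/(del1 * del2 * mu1)) * (del1 * del2 * mu1 *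
            sqnv (Beta (k+1) - a k)) := by
      funext k; rw [one_div, inv_mul_cancel_left₀ cM1.ne']
    rw [heq]
    simpa using hA.const_mul (1/(del1 * del2 * mu1))
  have hsq2 : Tendsto (fun k => sqnv (L.mulVec (Beta (k+1)) - b k)) atTop (nhds 0) := by
    have hA := hsqueeze _ (fun k => mul_nonneg cM2.le (sb_sqn_nonneg _))
      (fun k => (boundsT k).2.2.2)
    have heq : (fun k => sqnv (L.mulVec (Beta (k+1)) - b k))
        = fun k => (1/(del1 * del2 * mu2)) * (del1 * del2 * mu2 *
            sqnv (L.mulVec (Beta (k+1)) - b k)) := by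
      funext k; rw [one_div, inv_mul_cancel_left₀ cM2.ne']
    rw [heq]
    simpa using hA.const_mul (1/(del1 * del2 * mu2))
  -- l1 distances vanish
  have hl1a : Tendsto (fun k => l1 (Beta (k+1) - a k)) atTop (nhds 0) := by
    have hs : Tendsto (fun k => Real.sqrt (sqnv (Beta (k+1) - a k))) atTop (nhds 0) := by
      have := (Real.continuous_sqrt.tendsto 0).comp hsq1
      rwa [Real.sqrt_zero] at this
    apply squeeze_zero (fun k => sb_l1_nonneg _) (fun k => sb_l1_le_sqrt _)
    simpa [Function.comp] using hs.const_mul (p : ℝ)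
  have hl1b : Tendsto (fun k => l1 (L.mulVec (Beta (k+1)) - b k)) atTop (nhds 0) := by
    have hs : Tendsto (fun k => Real.sqrt (sqnv (L.mulVec (Beta (k+1)) - b k)))
        atTop (nhds 0) := by
      have := (Real.continuous_sqrt.tendsto 0).comp hsq2
      rwa [Real.sqrt_zero] at this
    apply squeeze_zero (fun k => sb_l1_nonneg _) (fun k => sb_l1_le_sqrt _)
    simpa [Function.comp] using hs.const_mul (m : ℝ)
  -- coordinate bounds on pstar, qstar
  have hpb : ∀ i, |pstar i| ≤ 1 := sb_coord_bound Bstar pstar hps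
  have hqb : ∀ i, |qstar i| ≤ 1 := sb_coord_bound (L.mulVec Bstar) qstar hqs
  -- assemble part 1
  have part1 : Tendsto (fun k : ℕ => l1 (Beta k) - l1 Bstar
      - dotp pstar (Beta k - Bstar)) atTop (nhds 0) := by
    have hub : ∀ k : ℕ, l1 (Beta (k+1)) - l1 Bstar - dotp pstar (Beta (k+1) - Bstar)
        ≤ (l1 (a k) - l1 Bstar - dotp pstar (a k - Bstar))
          + 2 * l1 (Beta (k+1) - a k) := by
      intro k
      have t1 := sb_l1_sub_le (Beta (k+1)) (a k)
      have t2 := sb_dotp_abs_le pstar (Beta (k+1) - a k) hpb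
      have t3 : dotp pstar (Beta (k+1) - Bstar)
          = dotp pstar (a k - Bstar) + dotp pstar (Beta (k+1) - a k) := by
        rw [sb_dotp_sub_right, sb_dotp_sub_right, sb_dotp_sub_right]; ring
      have t4 := (abs_le.mp t2).1
      linarith
    have hlb : ∀ k : ℕ, 0 ≤ l1 (Beta (k+1)) - l1 Bstar
        - dotp pstar (Beta (k+1) - Bstar) := by
      intro k; have := hps (Beta (k+1)); linarith
    have hDa : Tendsto (fun k => l1 (a k) - l1 Bstar - dotp pstar (a k - Bstar))
        atTop (nhds 0) := (tendsto_add_atTop_iff_nat 1).mp hDpa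
    have hup : Tendsto (fun k => (l1 (a k) - l1 Bstar - dotp pstar (a k - Bstar))
        + 2 * l1 (Beta (k+1) - a k)) atTop (nhds 0) := by
      simpa using hDa.add (hl1a.const_mul 2)
    have part1' := squeeze_zero hlb hub hup
    exact (tendsto_add_atTop_iff_nat 1).mp part1'
  -- assemble part 2
  have part2 : Tendsto (fun k : ℕ => l1 (L.mulVec (Beta k)) - l1 (L.mulVec Bstar)
      - dotp qstar (L.mulVec (Beta k) - L.mulVec Bstar)) atTop (nhds 0) := by
    have hub : ∀ k : ℕ, l1 (L.mulVec (Beta (k+1))) - l1 (L.mulVec Bstar)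
        - dotp qstar (L.mulVec (Beta (k+1)) - L.mulVec Bstar)
        ≤ (l1 (b k) - l1 (L.mulVec Bstar) - dotp qstar (b k - L.mulVec Bstar))
          + 2 * l1 (L.mulVec (Beta (k+1)) - b k) := by
      intro k
      have t1 := sb_l1_sub_le (L.mulVec (Beta (k+1))) (b k)
      have t2 := sb_dotp_abs_le qstar (L.mulVec (Beta (k+1)) - b k) hqb
      have t3 : dotp qstar (L.mulVec (Beta (k+1)) - L.mulVec Bstar)
          = dotp qstar (b k - L.mulVec Bstar)
            + dotp qstar (L.mulVec (Beta (k+1)) - b k) := by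
        rw [sb_dotp_sub_right, sb_dotp_sub_right, sb_dotp_sub_right]; ring
      have t4 := (abs_le.mp t2).1
      linarith
    have hlb : ∀ k : ℕ, 0 ≤ l1 (L.mulVec (Beta (k+1))) - l1 (L.mulVec Bstar)
        - dotp qstar (L.mulVec (Beta (k+1)) - L.mulVec Bstar) := by
      intro k; have := hqs (L.mulVec (Beta (k+1))); linarith
    have hDb : Tendsto (fun k => l1 (b k) - l1 (L.mulVec Bstar)
        - dotp qstar (b k - L.mulVec Bstar)) atTop (nhds 0) :=
      (tendsto_add_atTop_iff_nat 1).mp hDqb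
    have hup : Tendsto (fun k => (l1 (b k) - l1 (L.mulVec Bstar)
        - dotp qstar (b k - L.mulVec Bstar))
        + 2 * l1 (L.mulVec (Beta (k+1)) - b k)) atTop (nhds 0) := by
      simpa using hDb.add (hl1b.const_mul 2)
    have part2' := squeeze_zero hlb hub hup
    exact (tendsto_add_atTop_iff_nat 1).mp part2'
  exact ⟨part1, part2⟩
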